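/- Relaxed homological perturbation lemma. Let k be a ring in which 2 = 0, let C and Z be k-modules with k-linear maps d : C → C and δ : Z → Z satisfying d ∘ d = 0 and δ ∘ δ = 0, and let α : C → C satisfy α ∘ α + d ∘ α + α ∘ d = 0. Suppose given k-linear maps i : Z → C, π : C → Z and h : C → C satisfying π ∘ d = δ ∘ π, d ∘ i = i ∘ δ, π ∘ i = id_Z, i ∘ π = id_C + d ∘ h + h ∘ d, h ∘ i = 0 and π ∘ h = 0, but with h ∘ h = 0 NOT assumed, and assume id_C + h ∘ α is invertible in the endomorphism ring of C. Then id_C + α ∘ h is also invertible, and, setting β = π ∘ α ∘ (id + h ∘ α)⁻¹ ∘ i, Π = π ∘ (id + α ∘ h)⁻¹, H = (id + h ∘ α)⁻¹ ∘ h, I = (id + h ∘ α)⁻¹ ∘ i and K = Π ∘ h ∘ I, the following hold: β ∘ β + δ ∘ β + β ∘ δ = 0; Π ∘ (d + α) = (δ + β) ∘ Π; (d + α) ∘ I = I ∘ (δ + β); I ∘ Π = id_C + (d + α) ∘ H + H ∘ (d + α); and Π ∘ I = id_Z + (δ + β) ∘ K + K ∘ (δ + β). In particular Π and I are mutually inverse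 homotopy equivalences between (C, d + α) and (Z, δ + β). -/
import Mathlib

open LinearMap

private lemma c2_self {k : Type*} [CommRing k] (h2 : (2 : k) = 0)
    {M : Type*} [AddCommGroup M] [Module k M] (x : M) : x + x = 0 := by
  have h := two_smul k x
  rw [← h, h2, zero_smul]

private lemma c2_eq {k : Type*} [CommRing k] (h2 : (2 : k) = 0)
    {M : Type*} [AddCommGroup M] [Module k M] {x y : M} (hxy : x + y = 0) : x = y := by
  have h := c2_self h2 y
  calc x = x + (y + y) := by rw [h, add_zero]
    _ = (x + y) + y := by abel
    _ = y := by rw [hxy, zero_add]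

private lemma c2_z2 {k : Type*} [CommRing k] (h2 : (2 : k) = 0)
    {M : Type*} [AddCommGroup M] [Module k M] (x : M) : (2 : ℤ) • x = 0 := by
  rw [two_zsmul]; exact c2_self h2 x

private lemma c2_z3 {k : Type*} [CommRing k] (h2 : (2 : k) = 0)
    {M : Type*} [AddCommGroup M] [Module k M] (x : M) : (3 : ℤ) • x = x := by
  rw [show (3 : ℤ) = 2 + 1 by norm_num, add_zsmul, c2_z2 h2, one_zsmul, zero_add]

private lemma c2_z4 {k : Type*} [CommRing k] (h2 : (2 : k) = 0)
    {M : Type*} [AddCommGroup M] [Module k M] (x : M) : (4 : ℤ) • x = 0 := by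
  rw [show (4 : ℤ) = 2 + 2 by norm_num, add_zsmul, c2_z2 h2, zero_add]

private lemma c2_z5 {k : Type*} [CommRing k] (h2 : (2 : k) = 0)
    {M : Type*} [AddCommGroup M] [Module k M] (x : M) : (5 : ℤ) • x = x := by
  rw [show (5 : ℤ) = 4 + 1 by norm_num, add_zsmul, c2_z4 h2, one_zsmul, zero_add]

private lemma c2_z6 {k : Type*} [CommRing k] (h2 : (2 : k) = 0)
    {M : Type*} [AddCommGroup M] [Module k M] (x : M) : (6 : ℤ) • x = 0 := by
  rw [show (6 : ℤ) = 4 + 2 by norm_num, add_zsmul, c2_z4 h2, c2_z2 h2, zero_add]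

set_option maxHeartbeats 1000000 in
private theorem rhpl_aux {k : Type*} [CommRing k] (h2 : (2 : k) = 0)
    {C Z : Type*} [AddCommGroup C] [AddCommGroup Z] [Module k C] [Module k Z]
    (d α h : C →ₗ[k] C) (δ : Z →ₗ[k] Z)
    (i : Z →ₗ[k] C) (π : C →ₗ[k] Z)
    (hdd : d ∘ₗ d = 0) (hδδ : δ ∘ₗ δ = 0)
    (hMC : α ∘ₗ α + d ∘ₗ α + α ∘ₗ d = 0)
    (hπd : π ∘ₗ d = δ ∘ₗ π) (hdi : d ∘ₗ i = i ∘ₗ δ)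
    (hπi : π ∘ₗ i = LinearMap.id)
    (hiπ : i ∘ₗ π = LinearMap.id + d ∘ₗ h + h ∘ₗ d)
    (hhi : h ∘ₗ i = 0) (hπh : π ∘ₗ h = 0)
    (G : Module.End k C)
    (hG1 : ((1 : Module.End k C) + h ∘ₗ α) * G = 1)
    (hG2 : G * ((1 : Module.End k C) + h ∘ₗ α) = 1) :
    (((1 : Module.End k C) + α ∘ₗ h) * (1 + α ∘ₗ G ∘ₗ h) = 1) ∧
    ((1 + α ∘ₗ G ∘ₗ h) * ((1 : Module.End k C) + α ∘ₗ h) = 1) ∧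
    ((π ∘ₗ α ∘ₗ G ∘ₗ i) ∘ₗ (π ∘ₗ α ∘ₗ G ∘ₗ i) + δ ∘ₗ (π ∘ₗ α ∘ₗ G ∘ₗ i)
      + (π ∘ₗ α ∘ₗ G ∘ₗ i) ∘ₗ δ = 0) ∧
    ((π ∘ₗ (1 + α ∘ₗ G ∘ₗ h)) ∘ₗ (d + α)
      = (δ + π ∘ₗ α ∘ₗ G ∘ₗ i) ∘ₗ (π ∘ₗ (1 + α ∘ₗ G ∘ₗ h))) ∧
    ((d + α) ∘ₗ (G ∘ₗ i) = (G ∘ₗ i) ∘ₗ (δ + π ∘ₗ α ∘ₗ G ∘ₗ i)) ∧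
    ((G ∘ₗ i) ∘ₗ (π ∘ₗ (1 + α ∘ₗ G ∘ₗ h))
      = LinearMap.id + (d + α) ∘ₗ (G ∘ₗ h) + (G ∘ₗ h) ∘ₗ (d + α)) ∧
    ((π ∘ₗ (1 + α ∘ₗ G ∘ₗ h)) ∘ₗ (G ∘ₗ i)
      = LinearMap.id
        + (δ + π ∘ₗ α ∘ₗ G ∘ₗ i) ∘ₗ ((π ∘ₗ (1 + α ∘ₗ G ∘ₗ h)) ∘ₗ (h ∘ₗ (G ∘ₗ i)))
        + ((π ∘ₗ (1 + α ∘ₗ G ∘ₗ h)) ∘ₗ (h ∘ₗ (G ∘ₗ i))) ∘ₗ (δ + π ∘ₗ α ∘ₗ G ∘ₗ i)) := by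
  -- * versions
  have huG : ((1 : Module.End k C) + h * α) * G = 1 := by
    simpa only [Module.End.mul_eq_comp] using hG1
  have hGu : G * ((1 : Module.End k C) + h * α) = 1 := by
    simpa only [Module.End.mul_eq_comp] using hG2
  have hMCm : α * α + d * α + α * d = 0 := by
    simpa only [Module.End.mul_eq_comp] using hMC
  -- basic End C facts
  have b1 : h * α * G = 1 + G := by
    apply c2_eq h2
    calc h * α * G + ((1 : Module.End k C) + G)
        = ((1 : Module.End k C) + h * α) * G + 1 := by noncomm_ring
      _ = 1 + 1 := by rw [huG]
      _ = 0 := c2_self h2 1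
  have b2 : G * (h * α) = 1 + G := by
    apply c2_eq h2
    calc G * (h * α) + ((1 : Module.End k C) + G)
        = G * ((1 : Module.End k C) + h * α) + 1 := by noncomm_ring
      _ = 1 + 1 := by rw [hGu]
      _ = 0 := c2_self h2 1
  have bG : G = 1 + h * (α * G) := by
    apply c2_eq h2
    calc G + ((1 : Module.End k C) + h * (α * G))
        = ((1 : Module.End k C) + h * α) * G + 1 := by noncomm_ring
      _ = 1 + 1 := by rw [huG]
      _ = 0 := c2_self h2 1
  have cancel : ∀ Y : Module.End k C,
      G * (((1 : Module.End k C) + h * α) * Y * (1 + h * α)) * G = Y := by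
    intro Y
    calc G * (((1 : Module.End k C) + h * α) * Y * (1 + h * α)) * G
        = (G * ((1 : Module.End k C) + h * α)) * Y * (((1 : Module.End k C) + h * α) * G) := by
          noncomm_ring
      _ = Y := by rw [hGu, huG, one_mul, mul_one]
  have key : ((1 : Module.End k C) + h * α) * (G * α * G) * (1 + h * α)
      = ((1 : Module.End k C) + h * α) * (α * G + G * d * G + d * G + G * h * d * α * G)
        * (1 + h * α) := by
    calc ((1 : Module.End k C) + h * α) * (G * α * G) * (1 + h * α)
        = (((1 : Module.End k C) + h * α) * G) * α * (G * ((1 : Module.End k C) + h * α)) := by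
          noncomm_ring
      _ = α := by rw [huG, hGu, one_mul, mul_one]
      _ = α + h * (α * α + d * α + α * d) + (d + d) := by
          rw [hMCm, mul_zero, add_zero, c2_self h2 d, add_zero]
      _ = (((1 : Module.End k C) + h * α) * α) * (G * ((1 : Module.End k C) + h * α))
          + (((1 : Module.End k C) + h * α) * G) * (d * (G * ((1 : Module.End k C) + h * α)))
          + (((1 : Module.End k C) + h * α) * d) * (G * ((1 : Module.End k C) + h * α))
          + (((1 : Module.End k C) + h * α) * G)
            * ((h * d * α) * (G * ((1 : Module.End k C) + h * α))) := by
          rw [huG, hGu]; noncomm_ring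
      _ = ((1 : Module.End k C) + h * α) * (α * G + G * d * G + d * G + G * h * d * α * G)
          * (1 + h * α) := by noncomm_ring
  have b4 : G * α * G = α * G + G * d * G + d * G + G * h * d * α * G := by
    calc G * α * G
        = G * (((1 : Module.End k C) + h * α) * (G * α * G) * (1 + h * α)) * G :=
          (cancel _).symm
      _ = G * (((1 : Module.End k C) + h * α)
          * (α * G + G * d * G + d * G + G * h * d * α * G) * (1 + h * α)) * G := by rw [key]
      _ = α * G + G * d * G + d * G + G * h * d * α * G := cancel _
  -- comp versions
  have b1c : h ∘ₗ (α ∘ₗ G) = LinearMap.id + G := by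
    simpa only [Module.End.mul_eq_comp, Module.End.one_eq_id, LinearMap.comp_assoc] using b1
  have b2c : G ∘ₗ (h ∘ₗ α) = LinearMap.id + G := by
    simpa only [Module.End.mul_eq_comp, Module.End.one_eq_id, LinearMap.comp_assoc] using b2
  have b4c : G ∘ₗ (α ∘ₗ G)
      = α ∘ₗ G + G ∘ₗ (d ∘ₗ G) + d ∘ₗ G + G ∘ₗ (h ∘ₗ (d ∘ₗ (α ∘ₗ G))) := by
    simpa only [Module.End.mul_eq_comp, LinearMap.comp_assoc] using b4
  have bGc : G = LinearMap.id + h ∘ₗ (α ∘ₗ G) := by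
    simpa only [Module.End.mul_eq_comp, Module.End.one_eq_id, LinearMap.comp_assoc] using bG
  have bααc : α ∘ₗ α = d ∘ₗ α + α ∘ₗ d := by
    apply c2_eq h2
    rw [← add_assoc]; exact hMC
  have b5 : π ∘ₗ G = π := by
    conv_lhs => rw [bGc]
    have : π ∘ₗ (h ∘ₗ (α ∘ₗ G)) = 0 := by
      rw [← LinearMap.comp_assoc, hπh, LinearMap.zero_comp]
    rw [LinearMap.comp_add, LinearMap.comp_id, this, add_zero]
  -- tailed rules
  have tπh_C : ∀ t : C →ₗ[k] C, π ∘ₗ (h ∘ₗ t) = 0 := fun t => by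
    rw [← LinearMap.comp_assoc, hπh, LinearMap.zero_comp]
  have tπh_Z : ∀ t : Z →ₗ[k] C, π ∘ₗ (h ∘ₗ t) = 0 := fun t => by
    rw [← LinearMap.comp_assoc, hπh, LinearMap.zero_comp]
  have thi_C : ∀ t : C →ₗ[k] Z, h ∘ₗ (i ∘ₗ t) = 0 := fun t => by
    rw [← LinearMap.comp_assoc, hhi, LinearMap.zero_comp]
  have thi_Z : ∀ t : Z →ₗ[k] Z, h ∘ₗ (i ∘ₗ t) = 0 := fun t => by
    rw [← LinearMap.comp_assoc, hhi, LinearMap.zero_comp]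
  have tπi_C : ∀ t : C →ₗ[k] Z, π ∘ₗ (i ∘ₗ t) = t := fun t => by
    rw [← LinearMap.comp_assoc, hπi, LinearMap.id_comp]
  have tπi_Z : ∀ t : Z →ₗ[k] Z, π ∘ₗ (i ∘ₗ t) = t := fun t => by
    rw [← LinearMap.comp_assoc, hπi, LinearMap.id_comp]
  have tiπ_C : ∀ t : C →ₗ[k] C, i ∘ₗ (π ∘ₗ t) = t + d ∘ₗ (h ∘ₗ t) + h ∘ₗ (d ∘ₗ t) := fun t => by
    rw [← LinearMap.comp_assoc, hiπ]
    simp only [LinearMap.add_comp, LinearMap.id_comp, LinearMap.comp_assoc]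
  have tiπ_Z : ∀ t : Z →ₗ[k] C, i ∘ₗ (π ∘ₗ t) = t + d ∘ₗ (h ∘ₗ t) + h ∘ₗ (d ∘ₗ t) := fun t => by
    rw [← LinearMap.comp_assoc, hiπ]
    simp only [LinearMap.add_comp, LinearMap.id_comp, LinearMap.comp_assoc]
  have sδπ : δ ∘ₗ π = π ∘ₗ d := hπd.symm
  have tδπ_C : ∀ t : C →ₗ[k] C, δ ∘ₗ (π ∘ₗ t) = π ∘ₗ (d ∘ₗ t) := fun t => by
    rw [← LinearMap.comp_assoc, ← hπd, LinearMap.comp_assoc]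
  have tδπ_Z : ∀ t : Z →ₗ[k] C, δ ∘ₗ (π ∘ₗ t) = π ∘ₗ (d ∘ₗ t) := fun t => by
    rw [← LinearMap.comp_assoc, ← hπd, LinearMap.comp_assoc]
  have siδ : i ∘ₗ δ = d ∘ₗ i := hdi.symm
  have tiδ_C : ∀ t : C →ₗ[k] Z, i ∘ₗ (δ ∘ₗ t) = d ∘ₗ (i ∘ₗ t) := fun t => by
    rw [← LinearMap.comp_assoc, ← hdi, LinearMap.comp_assoc]
  have tiδ_Z : ∀ t : Z →ₗ[k] Z, i ∘ₗ (δ ∘ₗ t) = d ∘ₗ (i ∘ₗ t) := fun t => by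
    rw [← LinearMap.comp_assoc, ← hdi, LinearMap.comp_assoc]
  have tdd_C : ∀ t : C →ₗ[k] C, d ∘ₗ (d ∘ₗ t) = 0 := fun t => by
    rw [← LinearMap.comp_assoc, hdd, LinearMap.zero_comp]
  have tdd_Z : ∀ t : Z →ₗ[k] C, d ∘ₗ (d ∘ₗ t) = 0 := fun t => by
    rw [← LinearMap.comp_assoc, hdd, LinearMap.zero_comp]
  have tδδ_C : ∀ t : C →ₗ[k] Z, δ ∘ₗ (δ ∘ₗ t) = 0 := fun t => by
    rw [← LinearMap.comp_assoc, hδδ, LinearMap.zero_comp]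
  have tδδ_Z : ∀ t : Z →ₗ[k] Z, δ ∘ₗ (δ ∘ₗ t) = 0 := fun t => by
    rw [← LinearMap.comp_assoc, hδδ, LinearMap.zero_comp]
  have πdh0 : π ∘ₗ (d ∘ₗ h) = 0 := by
    rw [← LinearMap.comp_assoc, hπd, LinearMap.comp_assoc, hπh, LinearMap.comp_zero]
  have tπdh_C : ∀ t : C →ₗ[k] C, π ∘ₗ (d ∘ₗ (h ∘ₗ t)) = 0 := fun t => by
    rw [← tδπ_C, tπh_C, LinearMap.comp_zero]
  have tπdh_Z : ∀ t : Z →ₗ[k] C, π ∘ₗ (d ∘ₗ (h ∘ₗ t)) = 0 := fun t => by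
    rw [← tδπ_Z, tπh_Z, LinearMap.comp_zero]
  have thαG_C : ∀ t : C →ₗ[k] C, h ∘ₗ (α ∘ₗ (G ∘ₗ t)) = t + G ∘ₗ t := fun t => by
    have e := congrArg (fun X : Module.End k C => X ∘ₗ t) b1c
    simpa only [LinearMap.comp_assoc, LinearMap.add_comp, LinearMap.id_comp] using e
  have thαG_Z : ∀ t : Z →ₗ[k] C, h ∘ₗ (α ∘ₗ (G ∘ₗ t)) = t + G ∘ₗ t := fun t => by
    have e := congrArg (fun X : Module.End k C => X ∘ₗ t) b1c
    simpa only [LinearMap.comp_assoc, LinearMap.add_comp, LinearMap.id_comp] using e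
  have tGhα_C : ∀ t : C →ₗ[k] C, G ∘ₗ (h ∘ₗ (α ∘ₗ t)) = t + G ∘ₗ t := fun t => by
    have e := congrArg (fun X : Module.End k C => X ∘ₗ t) b2c
    simpa only [LinearMap.comp_assoc, LinearMap.add_comp, LinearMap.id_comp] using e
  have tGhα_Z : ∀ t : Z →ₗ[k] C, G ∘ₗ (h ∘ₗ (α ∘ₗ t)) = t + G ∘ₗ t := fun t => by
    have e := congrArg (fun X : Module.End k C => X ∘ₗ t) b2c
    simpa only [LinearMap.comp_assoc, LinearMap.add_comp, LinearMap.id_comp] using e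
  have tGαG_C : ∀ t : C →ₗ[k] C, G ∘ₗ (α ∘ₗ (G ∘ₗ t))
      = α ∘ₗ (G ∘ₗ t) + G ∘ₗ (d ∘ₗ (G ∘ₗ t)) + d ∘ₗ (G ∘ₗ t)
        + G ∘ₗ (h ∘ₗ (d ∘ₗ (α ∘ₗ (G ∘ₗ t)))) := fun t => by
    have e := congrArg (fun X : Module.End k C => X ∘ₗ t) b4c
    simpa only [LinearMap.comp_assoc, LinearMap.add_comp] using e
  have tGαG_Z : ∀ t : Z →ₗ[k] C, G ∘ₗ (α ∘ₗ (G ∘ₗ t))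
      = α ∘ₗ (G ∘ₗ t) + G ∘ₗ (d ∘ₗ (G ∘ₗ t)) + d ∘ₗ (G ∘ₗ t)
        + G ∘ₗ (h ∘ₗ (d ∘ₗ (α ∘ₗ (G ∘ₗ t)))) := fun t => by
    have e := congrArg (fun X : Module.End k C => X ∘ₗ t) b4c
    simpa only [LinearMap.comp_assoc, LinearMap.add_comp] using e
  have tαα_C : ∀ t : C →ₗ[k] C, α ∘ₗ (α ∘ₗ t) = d ∘ₗ (α ∘ₗ t) + α ∘ₗ (d ∘ₗ t) := fun t => by
    have e := congrArg (fun X : Module.End k C => X ∘ₗ t) bααc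
    simpa only [LinearMap.comp_assoc, LinearMap.add_comp] using e
  have tαα_Z : ∀ t : Z →ₗ[k] C, α ∘ₗ (α ∘ₗ t) = d ∘ₗ (α ∘ₗ t) + α ∘ₗ (d ∘ₗ t) := fun t => by
    have e := congrArg (fun X : Module.End k C => X ∘ₗ t) bααc
    simpa only [LinearMap.comp_assoc, LinearMap.add_comp] using e
  have tπG_C : ∀ t : C →ₗ[k] C, π ∘ₗ (G ∘ₗ t) = π ∘ₗ t := fun t => by
    rw [← LinearMap.comp_assoc, b5]
  have tπG_Z : ∀ t : Z →ₗ[k] C, π ∘ₗ (G ∘ₗ t) = π ∘ₗ t := fun t => by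
    rw [← LinearMap.comp_assoc, b5]
  -- the unit equations
  have e1m : ((1 : Module.End k C) + α * h) * (1 + α * (G * h)) = 1 := by
    calc ((1 : Module.End k C) + α * h) * (1 + α * (G * h))
        = 1 + α * (G * h) + α * h + α * ((h * α * G) * h) := by noncomm_ring
      _ = 1 + α * (G * h) + α * h + α * (((1 : Module.End k C) + G) * h) := by rw [b1]
      _ = 1 + (α * (G * h) + α * (G * h)) + (α * h + α * h) := by noncomm_ring
      _ = 1 := by rw [c2_self h2, c2_self h2, add_zero, add_zero]
  have e2m : ((1 : Module.End k C) + α * (G * h)) * (1 + α * h) = 1 := by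
    calc ((1 : Module.End k C) + α * (G * h)) * (1 + α * h)
        = 1 + α * (G * h) + α * h + α * ((G * (h * α)) * h) := by noncomm_ring
      _ = 1 + α * (G * h) + α * h + α * (((1 : Module.End k C) + G) * h) := by rw [b2]
      _ = 1 + (α * (G * h) + α * (G * h)) + (α * h + α * h) := by noncomm_ring
      _ = 1 := by rw [c2_self h2, c2_self h2, add_zero, add_zero]
  -- the five statements
  have hA1 : (π ∘ₗ α ∘ₗ G ∘ₗ i) ∘ₗ (π ∘ₗ α ∘ₗ G ∘ₗ i) + δ ∘ₗ (π ∘ₗ α ∘ₗ G ∘ₗ i)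
      + (π ∘ₗ α ∘ₗ G ∘ₗ i) ∘ₗ δ = 0 := by
    simp only [LinearMap.comp_add, LinearMap.add_comp, LinearMap.comp_assoc,
      LinearMap.comp_zero, LinearMap.zero_comp, LinearMap.id_comp, LinearMap.comp_id,
      Module.End.one_eq_id, add_zero, zero_add,
      hπi, tπi_C, tπi_Z, hπh, tπh_C, tπh_Z, hhi, thi_C, thi_Z,
      hiπ, tiπ_C, tiπ_Z, sδπ, tδπ_C, tδπ_Z, siδ, tiδ_C, tiδ_Z,
      b1c, thαG_C, thαG_Z, b2c, tGhα_C, tGhα_Z, b4c, tGαG_C, tGαG_Z,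
      bααc, tαα_C, tαα_Z, b5, tπG_C, tπG_Z,
      hdd, tdd_C, tdd_Z, hδδ, tδδ_C, tδδ_Z, πdh0, tπdh_C, tπdh_Z]
    abel_nf
    simp only [c2_z2 h2, c2_z3 h2, c2_z4 h2, c2_z5 h2, c2_z6 h2, add_zero, zero_add]
  have hA2 : (π ∘ₗ (1 + α ∘ₗ G ∘ₗ h)) ∘ₗ (d + α)
      = (δ + π ∘ₗ α ∘ₗ G ∘ₗ i) ∘ₗ (π ∘ₗ (1 + α ∘ₗ G ∘ₗ h)) := by
    apply c2_eq h2
    simp only [LinearMap.comp_add, LinearMap.add_comp, LinearMap.comp_assoc,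
      LinearMap.comp_zero, LinearMap.zero_comp, LinearMap.id_comp, LinearMap.comp_id,
      Module.End.one_eq_id, add_zero, zero_add,
      hπi, tπi_C, tπi_Z, hπh, tπh_C, tπh_Z, hhi, thi_C, thi_Z,
      hiπ, tiπ_C, tiπ_Z, sδπ, tδπ_C, tδπ_Z, siδ, tiδ_C, tiδ_Z,
      b1c, thαG_C, thαG_Z, b2c, tGhα_C, tGhα_Z, b4c, tGαG_C, tGαG_Z,
      bααc, tαα_C, tαα_Z, b5, tπG_C, tπG_Z,
      hdd, tdd_C, tdd_Z, hδδ, tδδ_C, tδδ_Z, πdh0, tπdh_C, tπdh_Z]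
    abel_nf
    simp only [c2_z2 h2, c2_z3 h2, c2_z4 h2, c2_z5 h2, c2_z6 h2, add_zero, zero_add]
  have hA3 : (d + α) ∘ₗ (G ∘ₗ i) = (G ∘ₗ i) ∘ₗ (δ + π ∘ₗ α ∘ₗ G ∘ₗ i) := by
    apply c2_eq h2
    simp only [LinearMap.comp_add, LinearMap.add_comp, LinearMap.comp_assoc,
      LinearMap.comp_zero, LinearMap.zero_comp, LinearMap.id_comp, LinearMap.comp_id,
      Module.End.one_eq_id, add_zero, zero_add,
      hπi, tπi_C, tπi_Z, hπh, tπh_C, tπh_Z, hhi, thi_C, thi_Z,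
      hiπ, tiπ_C, tiπ_Z, sδπ, tδπ_C, tδπ_Z, siδ, tiδ_C, tiδ_Z,
      b1c, thαG_C, thαG_Z, b2c, tGhα_C, tGhα_Z, b4c, tGαG_C, tGαG_Z,
      bααc, tαα_C, tαα_Z, b5, tπG_C, tπG_Z,
      hdd, tdd_C, tdd_Z, hδδ, tδδ_C, tδδ_Z, πdh0, tπdh_C, tπdh_Z]
    abel_nf
    simp only [c2_z2 h2, c2_z3 h2, c2_z4 h2, c2_z5 h2, c2_z6 h2, add_zero, zero_add]
  have hA4 : (G ∘ₗ i) ∘ₗ (π ∘ₗ (1 + α ∘ₗ G ∘ₗ h))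
      = LinearMap.id + (d + α) ∘ₗ (G ∘ₗ h) + (G ∘ₗ h) ∘ₗ (d + α) := by
    apply c2_eq h2
    simp only [LinearMap.comp_add, LinearMap.add_comp, LinearMap.comp_assoc,
      LinearMap.comp_zero, LinearMap.zero_comp, LinearMap.id_comp, LinearMap.comp_id,
      Module.End.one_eq_id, add_zero, zero_add,
      hπi, tπi_C, tπi_Z, hπh, tπh_C, tπh_Z, hhi, thi_C, thi_Z,
      hiπ, tiπ_C, tiπ_Z, sδπ, tδπ_C, tδπ_Z, siδ, tiδ_C, tiδ_Z,
      b1c, thαG_C, thαG_Z, b2c, tGhα_C, tGhα_Z, b4c, tGαG_C, tGαG_Z,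
      bααc, tαα_C, tαα_Z, b5, tπG_C, tπG_Z,
      hdd, tdd_C, tdd_Z, hδδ, tδδ_C, tδδ_Z, πdh0, tπdh_C, tπdh_Z]
    abel_nf
    simp only [c2_z2 h2, c2_z3 h2, c2_z4 h2, c2_z5 h2, c2_z6 h2, add_zero, zero_add]
  -- the homotopy identity
  have m3 : (π ∘ₗ (1 + α ∘ₗ G ∘ₗ h)) ∘ₗ (α ∘ₗ (h ∘ₗ (G ∘ₗ i)))
      = (π ∘ₗ (1 + α ∘ₗ G ∘ₗ h)) ∘ₗ (G ∘ₗ i) + LinearMap.id := by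
    apply c2_eq h2
    simp only [LinearMap.comp_add, LinearMap.add_comp, LinearMap.comp_assoc,
      LinearMap.comp_zero, LinearMap.zero_comp, LinearMap.id_comp, LinearMap.comp_id,
      Module.End.one_eq_id, add_zero, zero_add,
      hπi, tπi_C, tπi_Z, hπh, tπh_C, tπh_Z, hhi, thi_C, thi_Z,
      hiπ, tiπ_C, tiπ_Z, sδπ, tδπ_C, tδπ_Z, siδ, tiδ_C, tiδ_Z,
      b1c, thαG_C, thαG_Z, b2c, tGhα_C, tGhα_Z, b4c, tGαG_C, tGαG_Z,
      bααc, tαα_C, tαα_Z, b5, tπG_C, tπG_Z,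
      hdd, tdd_C, tdd_Z, hδδ, tδδ_C, tδδ_Z, πdh0, tπdh_C, tπdh_Z]
    abel_nf
    simp only [c2_z2 h2, c2_z3 h2, c2_z4 h2, c2_z5 h2, c2_z6 h2, add_zero, zero_add]
  have m4 : (π ∘ₗ (1 + α ∘ₗ G ∘ₗ h)) ∘ₗ (h ∘ₗ (α ∘ₗ (G ∘ₗ i)))
      = (π ∘ₗ (1 + α ∘ₗ G ∘ₗ h)) ∘ₗ (G ∘ₗ i) + LinearMap.id := by
    apply c2_eq h2
    simp only [LinearMap.comp_add, LinearMap.add_comp, LinearMap.comp_assoc,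
      LinearMap.comp_zero, LinearMap.zero_comp, LinearMap.id_comp, LinearMap.comp_id,
      Module.End.one_eq_id, add_zero, zero_add,
      hπi, tπi_C, tπi_Z, hπh, tπh_C, tπh_Z, hhi, thi_C, thi_Z,
      hiπ, tiπ_C, tiπ_Z, sδπ, tδπ_C, tδπ_Z, siδ, tiδ_C, tiδ_Z,
      b1c, thαG_C, thαG_Z, b2c, tGhα_C, tGhα_Z, b4c, tGαG_C, tGαG_Z,
      bααc, tαα_C, tαα_Z, b5, tπG_C, tπG_Z,
      hdd, tdd_C, tdd_Z, hδδ, tδδ_C, tδδ_Z, πdh0, tπdh_C, tπdh_Z]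
    abel_nf
    simp only [c2_z2 h2, c2_z3 h2, c2_z4 h2, c2_z5 h2, c2_z6 h2, add_zero, zero_add]
  have m5 : d ∘ₗ h + h ∘ₗ d = LinearMap.id + i ∘ₗ π := by
    apply c2_eq h2
    rw [hiπ]
    abel_nf
    simp only [c2_z2 h2, c2_z3 h2, c2_z4 h2, c2_z5 h2, c2_z6 h2, add_zero, zero_add]
  have m1 : (π ∘ₗ (1 + α ∘ₗ G ∘ₗ h)) ∘ₗ i = LinearMap.id := by
    simp only [LinearMap.comp_add, LinearMap.add_comp, LinearMap.comp_assoc,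
      LinearMap.comp_zero, LinearMap.zero_comp, LinearMap.id_comp, LinearMap.comp_id,
      Module.End.one_eq_id, add_zero, zero_add, hπi, hhi, thi_C, thi_Z]
  have aux1 : (i ∘ₗ π) ∘ₗ (G ∘ₗ i) = i := by
    rw [LinearMap.comp_assoc, tπG_Z, hπi, LinearMap.comp_id]
  have step2 : (π ∘ₗ (1 + α ∘ₗ G ∘ₗ h)) ∘ₗ ((LinearMap.id + i ∘ₗ π) ∘ₗ (G ∘ₗ i))
      = (π ∘ₗ (1 + α ∘ₗ G ∘ₗ h)) ∘ₗ (G ∘ₗ i) + LinearMap.id := by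
    rw [LinearMap.add_comp, LinearMap.id_comp, LinearMap.comp_add, aux1, m1]
  have s1 : (δ + π ∘ₗ α ∘ₗ G ∘ₗ i) ∘ₗ ((π ∘ₗ (1 + α ∘ₗ G ∘ₗ h)) ∘ₗ (h ∘ₗ (G ∘ₗ i)))
      = ((π ∘ₗ (1 + α ∘ₗ G ∘ₗ h)) ∘ₗ (d + α)) ∘ₗ (h ∘ₗ (G ∘ₗ i)) := by
    rw [← LinearMap.comp_assoc, ← hA2]
  have aux2 : (h ∘ₗ (G ∘ₗ i)) ∘ₗ (δ + π ∘ₗ α ∘ₗ G ∘ₗ i)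
      = h ∘ₗ ((d + α) ∘ₗ (G ∘ₗ i)) := by
    rw [LinearMap.comp_assoc, ← hA3]
  have s2 : ((π ∘ₗ (1 + α ∘ₗ G ∘ₗ h)) ∘ₗ (h ∘ₗ (G ∘ₗ i))) ∘ₗ (δ + π ∘ₗ α ∘ₗ G ∘ₗ i)
      = (π ∘ₗ (1 + α ∘ₗ G ∘ₗ h)) ∘ₗ (h ∘ₗ ((d + α) ∘ₗ (G ∘ₗ i))) := by
    rw [LinearMap.comp_assoc, aux2]
  have s3 : ((π ∘ₗ (1 + α ∘ₗ G ∘ₗ h)) ∘ₗ (d + α)) ∘ₗ (h ∘ₗ (G ∘ₗ i))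
      + (π ∘ₗ (1 + α ∘ₗ G ∘ₗ h)) ∘ₗ (h ∘ₗ ((d + α) ∘ₗ (G ∘ₗ i)))
      = (π ∘ₗ (1 + α ∘ₗ G ∘ₗ h)) ∘ₗ (G ∘ₗ i) + LinearMap.id := by
    have step1 : ((π ∘ₗ (1 + α ∘ₗ G ∘ₗ h)) ∘ₗ (d + α)) ∘ₗ (h ∘ₗ (G ∘ₗ i))
        + (π ∘ₗ (1 + α ∘ₗ G ∘ₗ h)) ∘ₗ (h ∘ₗ ((d + α) ∘ₗ (G ∘ₗ i)))
        = (π ∘ₗ (1 + α ∘ₗ G ∘ₗ h)) ∘ₗ ((d ∘ₗ h + h ∘ₗ d) ∘ₗ (G ∘ₗ i))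
          + (π ∘ₗ (1 + α ∘ₗ G ∘ₗ h)) ∘ₗ (α ∘ₗ (h ∘ₗ (G ∘ₗ i)))
          + (π ∘ₗ (1 + α ∘ₗ G ∘ₗ h)) ∘ₗ (h ∘ₗ (α ∘ₗ (G ∘ₗ i))) := by
      simp only [LinearMap.add_comp, LinearMap.comp_add, LinearMap.comp_assoc]
      abel
    rw [step1, m5, m3, m4, step2]
    abel_nf
    simp only [c2_z2 h2, c2_z3 h2, c2_z4 h2, c2_z5 h2, c2_z6 h2, add_zero, zero_add]
  have hA5 : (π ∘ₗ (1 + α ∘ₗ G ∘ₗ h)) ∘ₗ (G ∘ₗ i)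
      = LinearMap.id
        + (δ + π ∘ₗ α ∘ₗ G ∘ₗ i) ∘ₗ ((π ∘ₗ (1 + α ∘ₗ G ∘ₗ h)) ∘ₗ (h ∘ₗ (G ∘ₗ i)))
        + ((π ∘ₗ (1 + α ∘ₗ G ∘ₗ h)) ∘ₗ (h ∘ₗ (G ∘ₗ i))) ∘ₗ (δ + π ∘ₗ α ∘ₗ G ∘ₗ i) := by
    apply c2_eq h2
    rw [s1, s2]
    have regroup : ∀ a b x y : Z →ₗ[k] Z, a + (b + x + y) = (x + y) + (a + b) := by
      intros; abel
    rw [regroup, s3]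
    abel_nf
    simp only [c2_z2 h2, c2_z3 h2, c2_z4 h2, c2_z5 h2, c2_z6 h2, add_zero, zero_add]
  exact ⟨e1m, e2m, hA1, hA2, hA3, hA4, hA5⟩

/-- Relaxed homological perturbation lemma (side condition `h ∘ h = 0` dropped),
with Markl's explicit homotopy `K = Π ∘ h ∘ I`. -/
theorem relaxed_homological_perturbation_lemma
    {k : Type*} [CommRing k] (h2 : (2 : k) = 0)
    {C Z : Type*} [AddCommGroup C] [AddCommGroup Z] [Module k C] [Module k Z]
    (d α h : C →ₗ[k] C) (δ : Z →ₗ[k] Z)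
    (i : Z →ₗ[k] C) (π : C →ₗ[k] Z)
    (hdd : d ∘ₗ d = 0) (hδδ : δ ∘ₗ δ = 0)
    (hMC : α ∘ₗ α + d ∘ₗ α + α ∘ₗ d = 0)
    (hπd : π ∘ₗ d = δ ∘ₗ π) (hdi : d ∘ₗ i = i ∘ₗ δ)
    (hπi : π ∘ₗ i = LinearMap.id)
    (hiπ : i ∘ₗ π = LinearMap.id + d ∘ₗ h + h ∘ₗ d)
    (hhi : h ∘ₗ i = 0) (hπh : π ∘ₗ h = 0)
    (hinv : IsUnit ((1 : Module.End k C) + h ∘ₗ α)) :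
    IsUnit ((1 : Module.End k C) + α ∘ₗ h) ∧
    (let G : C →ₗ[k] C := Ring.inverse ((1 : Module.End k C) + h ∘ₗ α)
     let G' : C →ₗ[k] C := Ring.inverse ((1 : Module.End k C) + α ∘ₗ h)
     let β : Z →ₗ[k] Z := π ∘ₗ α ∘ₗ G ∘ₗ i
     let Pr : C →ₗ[k] Z := π ∘ₗ G'
     let H : C →ₗ[k] C := G ∘ₗ h
     let I : Z →ₗ[k] C := G ∘ₗ i
     let K : Z →ₗ[k] Z := Pr ∘ₗ h ∘ₗ I
     (β ∘ₗ β + δ ∘ₗ β + β ∘ₗ δ = 0) ∧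
     (Pr ∘ₗ (d + α) = (δ + β) ∘ₗ Pr) ∧
     ((d + α) ∘ₗ I = I ∘ₗ (δ + β)) ∧
     (I ∘ₗ Pr = LinearMap.id + (d + α) ∘ₗ H + H ∘ₗ (d + α)) ∧
     (Pr ∘ₗ I = LinearMap.id + (δ + β) ∘ₗ K + K ∘ₗ (δ + β))) := by
  have hG1 : ((1 : Module.End k C) + h ∘ₗ α)
      * Ring.inverse ((1 : Module.End k C) + h ∘ₗ α) = 1 :=
    Ring.mul_inverse_cancel _ hinv
  have hG2 : Ring.inverse ((1 : Module.End k C) + h ∘ₗ α)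
      * ((1 : Module.End k C) + h ∘ₗ α) = 1 :=
    Ring.inverse_mul_cancel _ hinv
  obtain ⟨e1, e2, hA1, hA2, hA3, hA4, hA5⟩ :=
    rhpl_aux h2 d α h δ i π hdd hδδ hMC hπd hdi hπi hiπ hhi hπh
      (Ring.inverse ((1 : Module.End k C) + h ∘ₗ α)) hG1 hG2
  have hu' : IsUnit ((1 : Module.End k C) + α ∘ₗ h) :=
    ⟨⟨(1 : Module.End k C) + α ∘ₗ h,
      1 + α ∘ₗ Ring.inverse ((1 : Module.End k C) + h ∘ₗ α) ∘ₗ h, e1, e2⟩, rfl⟩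
  refine ⟨hu', ?_⟩
  have hG'eq : Ring.inverse ((1 : Module.End k C) + α ∘ₗ h)
      = 1 + α ∘ₗ Ring.inverse ((1 : Module.End k C) + h ∘ₗ α) ∘ₗ h := by
    calc Ring.inverse ((1 : Module.End k C) + α ∘ₗ h)
        = Ring.inverse ((1 : Module.End k C) + α ∘ₗ h)
          * (((1 : Module.End k C) + α ∘ₗ h)
            * (1 + α ∘ₗ Ring.inverse ((1 : Module.End k C) + h ∘ₗ α) ∘ₗ h)) := by
          rw [e1, mul_one]
      _ = (Ring.inverse ((1 : Module.End k C) + α ∘ₗ h) * ((1 : Module.End k C) + α ∘ₗ h))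
          * (1 + α ∘ₗ Ring.inverse ((1 : Module.End k C) + h ∘ₗ α) ∘ₗ h) :=
          (mul_assoc _ _ _).symm
      _ = 1 + α ∘ₗ Ring.inverse ((1 : Module.End k C) + h ∘ₗ α) ∘ₗ h := by
          rw [Ring.inverse_mul_cancel _ hu', one_mul]
  simp only [hG'eq]
  exact ⟨hA1, hA2, hA3, hA4, hA5⟩
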